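/- arXiv:1510.02533 — 2 statements merged into one kernel-verified Lean document; each statement's English description precedes it below -/
import Mathlib

section
/- Suppose n ≥ βL/μ for some β > 0. Then for every x ∈ ℝ^d and all φ_1, …, φ_n ∈ ℝ^d: f(x) ≥ (1/n)∑_i f_i(φ_i) + (1/n)∑_i ⟨∇f_i(φ_i), x − φ_i⟩ + (β/(2μn²))∑_i ‖∇f_i(x) − ∇f_i(φ_i)‖² + (βL/(2n²))∑_i ‖x − φ_i‖² + (β/n²)∑_i ⟨∇f_i(x) − ∇f_i(φ_i), φ_i − x⟩. -/
open scoped RealInnerProductSpace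

section Aux

variable {E : Type*} [NormedAddCommGroup E] [InnerProductSpace ℝ E]

private lemma finito_polar (a b : E) : ‖a‖ ^ 2 - ‖b‖ ^ 2 - 2 * ⟪b, a - b⟫ = ‖a - b‖ ^ 2 := by
  have h := @norm_sub_sq_real E _ _ a b
  have h2 : (⟪b, a - b⟫ : ℝ) = ⟪b, a⟫ - ⟪b, b⟫ := inner_sub_right _ _ _
  have h3 : (⟪b, b⟫ : ℝ) = ‖b‖ ^ 2 := real_inner_self_eq_norm_sq b
  have h4 : (⟪b, a⟫ : ℝ) = ⟪a, b⟫ := real_inner_comm a b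
  rw [h4] at h2
  linarith

private lemma finito_cocoercive (L : ℝ) (hL : 0 < L) (f : E → ℝ) (f' : E → E)
    (hdesc : ∀ x y, f x ≤ f y + ⟪f' y, x - y⟫ + L / 2 * ‖x - y‖ ^ 2)
    (hconv : ∀ x y, f y + ⟪f' y, x - y⟫ ≤ f x) (x y : E) :
    f y + ⟪f' y, x - y⟫ + 1 / (2 * L) * ‖f' x - f' y‖ ^ 2 ≤ f x := by
  set g := f' x - f' y with hg
  set z := x - (1 / L) • g with hz
  have h1 := hconv z y
  have h2 := hdesc z x
  have hzx : z - x = -((1 / L) • g) := by rw [hz]; abel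
  have hzy : z - y = (x - y) - (1 / L) • g := by rw [hz]; abel
  have e1 : (⟪f' y, z - y⟫ : ℝ) = ⟪f' y, x - y⟫ - (1 / L) * ⟪f' y, g⟫ := by
    rw [hzy, inner_sub_right, real_inner_smul_right]
  have e2 : (⟪f' x, z - x⟫ : ℝ) = -((1 / L) * ⟪f' x, g⟫) := by
    rw [hzx, inner_neg_right, real_inner_smul_right]
  have e3 : ‖z - x‖ ^ 2 = (1 / L) ^ 2 * ‖g‖ ^ 2 := by
    rw [hzx, norm_neg, norm_smul]
    rw [Real.norm_eq_abs, mul_pow, sq_abs]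
  have e4 : (⟪f' x, g⟫ : ℝ) - ⟪f' y, g⟫ = ‖g‖ ^ 2 := by
    rw [← inner_sub_left, ← hg, real_inner_self_eq_norm_sq]
  rw [e1] at h1
  rw [e2, e3] at h2
  have hL2 : L / 2 * ((1 / L) ^ 2 * ‖g‖ ^ 2) = 1 / (2 * L) * ‖g‖ ^ 2 := by
    field_simp
  rw [hL2] at h2
  have e5 : 1 / L * ⟪f' x, g⟫ - 1 / L * ⟪f' y, g⟫ = 1 / L * ‖g‖ ^ 2 := by
    rw [← mul_sub, e4]
  have e6 : 1 / L * ‖g‖ ^ 2 = 2 * (1 / (2 * L) * ‖g‖ ^ 2) := by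
    field_simp
  linarith

private lemma finito_scalar (n μ L β D q s p : ℝ) (hn : 1 ≤ n) (hμ : 0 < μ)
    (hμL : μ ≤ L) (hβ : 0 < β) (hbig : β * L ≤ n * μ)
    (hq : 0 ≤ q) (hs : 0 ≤ s) (hD0 : μ / 2 * s ≤ D)
    (fact2 : q - 2 * μ * p + μ ^ 2 * s ≤ 2 * (L - μ) * D - μ * (L - μ) * s) :
    β / (2 * μ * n ^ 2) * q + β * L / (2 * n ^ 2) * s + β / n ^ 2 * (-p) ≤ 1 / n * D := by
  have hn0 : (0:ℝ) < n := lt_of_lt_of_le one_pos hn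
  have hD : 0 ≤ D := le_trans (by positivity) hD0
  have key : β * (q + μ * L * s - 2 * μ * p) ≤ 2 * μ * n * D := by
    have h2 : q + μ * L * s - 2 * μ * p ≤ 2 * (L - μ) * D := by nlinarith [mul_nonneg (mul_nonneg hμ.le (sub_nonneg.2 hμL)) hs]
    have h3 : β * (q + μ * L * s - 2 * μ * p) ≤ β * (2 * (L - μ) * D) :=
      mul_le_mul_of_nonneg_left h2 hβ.le
    have h4 : β * (L - μ) ≤ n * μ := by nlinarith
    have h5 : β * (2 * (L - μ) * D) = 2 * (β * (L - μ)) * D := by ring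
    have h6 : 2 * (β * (L - μ)) * D ≤ 2 * (n * μ) * D := by nlinarith
    calc β * (q + μ * L * s - 2 * μ * p) ≤ β * (2 * (L - μ) * D) := h3
      _ = 2 * (β * (L - μ)) * D := h5
      _ ≤ 2 * (n * μ) * D := h6
      _ = 2 * μ * n * D := by ring
  rw [← sub_nonneg]
  have expand : 1 / n * D - (β / (2 * μ * n ^ 2) * q + β * L / (2 * n ^ 2) * s + β / n ^ 2 * (-p))
      = (2 * μ * n * D - β * (q + μ * L * s - 2 * μ * p)) / (2 * μ * n ^ 2) := by
    field_simp; ring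
  rw [expand]
  apply div_nonneg (by linarith) (by positivity)

end Aux

section Aux2

variable {E : Type*} [NormedAddCommGroup E] [InnerProductSpace ℝ E] [CompleteSpace E]

private lemma finito_descent (L : ℝ) (f : E → ℝ) (f' : E → E)
    (hgrad : ∀ x, HasGradientAt f (f' x) x)
    (hsmooth : ∀ x y, ‖f' x - f' y‖ ≤ L * ‖x - y‖) (x y : E) :
    f x ≤ f y + ⟪f' y, x - y⟫ + L / 2 * ‖x - y‖ ^ 2 := by
  set v := x - y with hv
  set K := (⟪f' y, v⟫ : ℝ) with hK
  set M := L / 2 * ‖v‖ ^ 2 with hM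
  set c : ℝ → E := fun t => y + t • v with hc
  set g : ℝ → ℝ := fun t => f (c t) - t * K - t ^ 2 * M with hgdef
  have hcderiv : ∀ t : ℝ, HasDerivAt c v t := by
    intro t
    have := ((hasDerivAt_id t).smul_const v).const_add y
    simp only [id, one_smul] at this
    exact this
  have hfc : ∀ t : ℝ, HasDerivAt (fun s => f (c s)) ⟪f' (c t), v⟫ t := by
    intro t
    have := ((hgrad (c t)).hasFDerivAt).comp_hasDerivAt t (hcderiv t)
    simp [InnerProductSpace.toDual_apply_apply] at this
    exact this
  have hg : ∀ t : ℝ, HasDerivAt g (⟪f' (c t), v⟫ - K - 2 * t * M) t := by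
    intro t
    have h1 : HasDerivAt (fun s : ℝ => s * K) K t := by
      simpa using (hasDerivAt_id t).mul_const K
    have h2 : HasDerivAt (fun s : ℝ => s ^ 2 * M) (2 * t * M) t := by
      simpa using (hasDerivAt_pow 2 t).mul_const M
    exact ((hfc t).sub h1).sub h2
  have hgdiff : Differentiable ℝ g := fun t => (hg t).differentiableAt
  have hderiv_nonpos : ∀ t ∈ interior (Set.Icc (0:ℝ) 1), deriv g t ≤ 0 := by
    intro t ht
    rw [interior_Icc] at ht
    rw [(hg t).deriv]
    have h1 : (⟪f' (c t), v⟫ : ℝ) - K = ⟪f' (c t) - f' y, v⟫ := by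
      rw [inner_sub_left]
    have h2 : (⟪f' (c t) - f' y, v⟫ : ℝ) ≤ ‖f' (c t) - f' y‖ * ‖v‖ :=
      real_inner_le_norm _ _
    have h3 : ‖f' (c t) - f' y‖ ≤ L * (t * ‖v‖) := by
      have := hsmooth (c t) y
      have hcy : c t - y = t • v := by simp [hc]
      rw [hcy, norm_smul] at this
      simpa [abs_of_nonneg ht.1.le, mul_assoc] using this
    have h4 : ‖f' (c t) - f' y‖ * ‖v‖ ≤ L * t * ‖v‖ ^ 2 := by
      have := mul_le_mul_of_nonneg_right h3 (norm_nonneg v)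
      nlinarith [norm_nonneg v]
    have : (⟪f' (c t), v⟫ : ℝ) - K ≤ L * t * ‖v‖ ^ 2 := by
      rw [h1]; linarith
    have hM' : 2 * t * M = L * t * ‖v‖ ^ 2 := by rw [hM]; ring
    linarith [hM' ▸ this]
  have hanti : AntitoneOn g (Set.Icc (0:ℝ) 1) :=
    antitoneOn_of_deriv_nonpos (convex_Icc 0 1) hgdiff.continuous.continuousOn
      (hgdiff.differentiableOn) hderiv_nonpos
  have h10 : g 1 ≤ g 0 :=
    hanti (Set.mem_Icc.2 ⟨le_refl 0, zero_le_one⟩) (Set.mem_Icc.2 ⟨zero_le_one, le_refl 1⟩)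
      zero_le_one
  have hc1 : c 1 = x := by simp [hc, hv]
  have hc0 : c 0 = y := by simp [hc]
  rw [hgdef] at h10
  simp only [hc1, hc0, one_pow, one_mul, zero_mul, pow_two, mul_zero, sub_zero] at h10
  rw [hK, hM] at h10
  linarith

/-- The interpolation inequality in multiplied form. -/
private lemma finito_fact2 (μ L : ℝ) (hμ : 0 < μ) (hμL : μ ≤ L) (f : E → ℝ) (f' : E → E)
    (hgrad : ∀ x, HasGradientAt f (f' x) x)
    (hsmooth : ∀ a b, ‖f' a - f' b‖ ≤ L * ‖a - b‖)
    (hsc : ∀ a b, f a ≥ f b + ⟪f' b, a - b⟫ + μ / 2 * ‖a - b‖ ^ 2) (x y : E) :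
    ‖f' x - f' y‖ ^ 2 - 2 * μ * ⟪f' x - f' y, x - y⟫ + μ ^ 2 * ‖x - y‖ ^ 2
      ≤ 2 * (L - μ) * (f x - f y - ⟪f' y, x - y⟫) - μ * (L - μ) * ‖x - y‖ ^ 2 := by
  -- monotonicity: ⟪g, r⟫ ≥ μ ‖r‖²
  have hmono : μ * ‖x - y‖ ^ 2 ≤ ⟪f' x - f' y, x - y⟫ := by
    have h1 := hsc x y
    have h2 := hsc y x
    have e1 : (⟪f' x, y - x⟫ : ℝ) = -⟪f' x, x - y⟫ := by
      rw [← inner_neg_right]; congr 1; abel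
    have e2 : ‖y - x‖ = ‖x - y‖ := by rw [← norm_neg]; congr 1; abel
    rw [e1, e2] at h2
    have e3 : (⟪f' x - f' y, x - y⟫ : ℝ) = ⟪f' x, x - y⟫ - ⟪f' y, x - y⟫ := by
      rw [inner_sub_left]
    linarith
  rcases eq_or_lt_of_le hμL with hfin | hlt
  · -- case μ = L : left side is ‖g - μ r‖² ≤ 0, right side is 0
    subst hfin
    have hq : ‖f' x - f' y‖ ^ 2 ≤ μ ^ 2 * ‖x - y‖ ^ 2 := by
      have := hsmooth x y
      nlinarith [norm_nonneg (f' x - f' y), norm_nonneg (x - y)]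
    nlinarith
  · -- case μ < L : apply cocoercivity to h = f - μ/2 ‖·‖²
    set h : E → ℝ := fun z => f z - μ / 2 * ‖z‖ ^ 2 with hh
    set h' : E → E := fun z => f' z - μ • z with hh'
    have inner_h' : ∀ a b : E, (⟪h' b, a - b⟫ : ℝ) = ⟪f' b, a - b⟫ - μ * ⟪b, a - b⟫ := by
      intro a b
      rw [hh']
      simp only [inner_sub_left, real_inner_smul_left]
    have hpol : ∀ a b : E, ‖a‖ ^ 2 - ‖b‖ ^ 2 - 2 * ⟪b, a - b⟫ = ‖a - b‖ ^ 2 :=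
      fun a b => finito_polar a b
    have hdesc_f : ∀ a b, f a ≤ f b + ⟪f' b, a - b⟫ + L / 2 * ‖a - b‖ ^ 2 :=
      finito_descent L f f' hgrad hsmooth
    have hdesc_h : ∀ a b, h a ≤ h b + ⟪h' b, a - b⟫ + (L - μ) / 2 * ‖a - b‖ ^ 2 := by
      intro a b
      have := hdesc_f a b
      have hp := hpol a b
      rw [hh]
      rw [inner_h']
      dsimp only
      nlinarith [hp]
    have hconv_h : ∀ a b, h b + ⟪h' b, a - b⟫ ≤ h a := by
      intro a b
      have := hsc a b
      have hp := hpol a b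
      rw [hh]
      rw [inner_h']
      dsimp only
      nlinarith [hp]
    have hco := finito_cocoercive (L - μ) (by linarith) h h' hdesc_h hconv_h x y
    -- expand ‖h' x - h' y‖²
    have hdiff : h' x - h' y = (f' x - f' y) - μ • (x - y) := by
      rw [hh']; dsimp only; rw [smul_sub]; abel
    have hnorm : ‖h' x - h' y‖ ^ 2
        = ‖f' x - f' y‖ ^ 2 - 2 * μ * ⟪f' x - f' y, x - y⟫ + μ ^ 2 * ‖x - y‖ ^ 2 := by
      rw [hdiff, norm_sub_sq_real, real_inner_smul_right, norm_smul, Real.norm_eq_abs,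
        mul_pow, sq_abs]
      ring
    rw [hh] at hco
    rw [inner_h'] at hco
    dsimp only at hco
    rw [hnorm] at hco
    have hp := hpol x y
    have hLμ : (0:ℝ) < L - μ := by linarith
    -- hco : f y - μ/2‖y‖² + (⟪f' y,x-y⟫ - μ⟪y,x-y⟫) + 1/(2(L-μ)) * W ≤ f x - μ/2‖x‖²
    -- where W is the expanded norm; multiply through by 2(L-μ)
    have key : (1 : ℝ) / (2 * (L - μ))
        * (‖f' x - f' y‖ ^ 2 - 2 * μ * ⟪f' x - f' y, x - y⟫ + μ ^ 2 * ‖x - y‖ ^ 2)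
        ≤ (f x - f y - ⟪f' y, x - y⟫) - μ / 2 * ‖x - y‖ ^ 2 := by nlinarith [hp]
    have h2L : (0:ℝ) < 2 * (L - μ) := by linarith
    have := mul_le_mul_of_nonneg_left key h2L.le
    rw [← mul_assoc] at this
    rw [mul_one_div, div_self (ne_of_gt h2L), one_mul] at this
    nlinarith [this]

end Aux2

theorem finito_scaled_lower_bound (d n : ℕ) (hn : 1 ≤ n) (μ L β : ℝ)
    (hμ : 0 < μ) (hμL : μ ≤ L) (hβ : 0 < β)
    (hbig : β * L / μ ≤ (n : ℝ))
    (f : Fin n → EuclideanSpace ℝ (Fin d) → ℝ)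
    (f' : Fin n → EuclideanSpace ℝ (Fin d) → EuclideanSpace ℝ (Fin d))
    (hgrad : ∀ i x, HasGradientAt (f i) (f' i x) x)
    (hsmooth : ∀ i x y, ‖f' i x - f' i y‖ ≤ L * ‖x - y‖)
    (hsc : ∀ i x y, f i x ≥ f i y + ⟪f' i y, x - y⟫ + μ / 2 * ‖x - y‖ ^ 2)
    (x : EuclideanSpace ℝ (Fin d)) (φ : Fin n → EuclideanSpace ℝ (Fin d)) :
    (1 / (n : ℝ)) * ∑ i, f i x ≥
      (1 / (n : ℝ)) * ∑ i, f i (φ i)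
      + (1 / (n : ℝ)) * ∑ i, ⟪f' i (φ i), x - φ i⟫
      + (β / (2 * μ * (n : ℝ) ^ 2)) * ∑ i, ‖f' i x - f' i (φ i)‖ ^ 2
      + (β * L / (2 * (n : ℝ) ^ 2)) * ∑ i, ‖x - φ i‖ ^ 2
      + (β / (n : ℝ) ^ 2) * ∑ i, ⟪f' i x - f' i (φ i), φ i - x⟫ := by
  have hn' : (1:ℝ) ≤ (n:ℝ) := by exact_mod_cast hn
  have hbig' : β * L ≤ (n:ℝ) * μ := by
    rw [div_le_iff₀ hμ] at hbig
    linarith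
  have key : ∀ i : Fin n,
      (1 / (n : ℝ)) * f i (φ i) + (1 / (n : ℝ)) * ⟪f' i (φ i), x - φ i⟫
      + (β / (2 * μ * (n : ℝ) ^ 2)) * ‖f' i x - f' i (φ i)‖ ^ 2
      + (β * L / (2 * (n : ℝ) ^ 2)) * ‖x - φ i‖ ^ 2
      + (β / (n : ℝ) ^ 2) * ⟪f' i x - f' i (φ i), φ i - x⟫
      ≤ (1 / (n : ℝ)) * f i x := by
    intro i
    set D : ℝ := f i x - f i (φ i) - ⟪f' i (φ i), x - φ i⟫ with hD
    have hD0 : μ / 2 * ‖x - φ i‖ ^ 2 ≤ D := by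
      have := hsc i x (φ i)
      rw [hD]; linarith
    have fact2 := finito_fact2 μ L hμ hμL (f i) (f' i) (hgrad i) (hsmooth i) (hsc i) x (φ i)
    rw [← hD] at fact2
    have hsc' := finito_scalar (n:ℝ) μ L β D (‖f' i x - f' i (φ i)‖ ^ 2) (‖x - φ i‖ ^ 2)
      (⟪f' i x - f' i (φ i), x - φ i⟫) hn' hμ hμL hβ hbig'
      (by positivity) (by positivity) hD0 (by linarith [fact2])
    have hneg : (⟪f' i x - f' i (φ i), φ i - x⟫ : ℝ) = -⟪f' i x - f' i (φ i), x - φ i⟫ := by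
      rw [← inner_neg_right]; congr 1; abel
    have hexp : 1 / (n:ℝ) * D
        = 1 / (n:ℝ) * f i x - 1 / (n:ℝ) * f i (φ i) - 1 / (n:ℝ) * ⟪f' i (φ i), x - φ i⟫ := by
      rw [hD]; ring
    rw [hneg]
    rw [hexp] at hsc'
    linarith
  have hsum := Finset.sum_le_sum (fun i (_ : i ∈ Finset.univ) => key i)
  have e1 : ∑ i : Fin n, ((1 / (n : ℝ)) * f i (φ i) + (1 / (n : ℝ)) * ⟪f' i (φ i), x - φ i⟫
        + (β / (2 * μ * (n : ℝ) ^ 2)) * ‖f' i x - f' i (φ i)‖ ^ 2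
        + (β * L / (2 * (n : ℝ) ^ 2)) * ‖x - φ i‖ ^ 2
        + (β / (n : ℝ) ^ 2) * ⟪f' i x - f' i (φ i), φ i - x⟫)
      = (1 / (n : ℝ)) * ∑ i, f i (φ i)
      + (1 / (n : ℝ)) * ∑ i, ⟪f' i (φ i), x - φ i⟫
      + (β / (2 * μ * (n : ℝ) ^ 2)) * ∑ i, ‖f' i x - f' i (φ i)‖ ^ 2
      + (β * L / (2 * (n : ℝ) ^ 2)) * ∑ i, ‖x - φ i‖ ^ 2
      + (β / (n : ℝ) ^ 2) * ∑ i, ⟪f' i x - f' i (φ i), φ i - x⟫ := by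
    simp only [Finset.sum_add_distrib, ← Finset.mul_sum]
  have e2 : ∑ i : Fin n, (1 / (n : ℝ)) * f i x = (1 / (n : ℝ)) * ∑ i, f i x :=
    (Finset.mul_sum _ _ _).symm
  rw [ge_iff_le, ← e1, ← e2]
  exact hsum
end

section
/- Suppose each f_i is μ-strongly convex and L_i-smooth (with possibly different constants L_i ≥ μ > 0), and let L̄ = (1/n)∑_i L_i. Set c_i = (μn + L_i − μ)/μ and Z = ∑_i c_i, and run k Prox-Finito update steps where the index j at each step is drawn independently with probability p_j = c_j/Z (so E below is the corresponding average over all index sequences, weighted by the product of their probabilities). Then f(w*) − E[B^k(w^k)] ≤ (1 − μ/(μn + L̄ − μ))^k [f(w*) − B^0(w^0)]. -/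
open scoped RealInnerProductSpace

/-- The strong-convexity lower bound `l_i` attached to table entry `φ i`. -/
noncomputable def pfL (d n : ℕ) (μ : ℝ)
    (f : Fin n → EuclideanSpace ℝ (Fin d) → ℝ)
    (f' : Fin n → EuclideanSpace ℝ (Fin d) → EuclideanSpace ℝ (Fin d))
    (φ : Fin n → EuclideanSpace ℝ (Fin d)) (i : Fin n)
    (x : EuclideanSpace ℝ (Fin d)) : ℝ :=
  f i (φ i) + ⟪f' i (φ i), x - φ i⟫ + μ / 2 * ‖x - φ i‖ ^ 2

/-- The global lower bound `B` associated with a table `φ`. -/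
noncomputable def pfB (d n : ℕ) (μ : ℝ)
    (f : Fin n → EuclideanSpace ℝ (Fin d) → ℝ)
    (f' : Fin n → EuclideanSpace ℝ (Fin d) → EuclideanSpace ℝ (Fin d))
    (φ : Fin n → EuclideanSpace ℝ (Fin d))
    (x : EuclideanSpace ℝ (Fin d)) : ℝ :=
  (1 / (n : ℝ)) * ∑ i, pfL d n μ f f' φ i x

/-- The minimizer of the global lower bound `B` associated with a table `φ`. -/
noncomputable def pfW (d n : ℕ) (μ : ℝ)
    (f' : Fin n → EuclideanSpace ℝ (Fin d) → EuclideanSpace ℝ (Fin d))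
    (φ : Fin n → EuclideanSpace ℝ (Fin d)) : EuclideanSpace ℝ (Fin d) :=
  (1 / (n : ℝ)) • ∑ i, φ i - (1 / (μ * n)) • ∑ i, f' i (φ i)

/-- The Prox-Finito table after `k` update steps with index sequence `js`, where
`z ψ j` gives the new table entry for an update of table `ψ` at index `j`. -/
noncomputable def pfIter (d n : ℕ)
    (z : (Fin n → EuclideanSpace ℝ (Fin d)) → Fin n → EuclideanSpace ℝ (Fin d))
    (φ0 : Fin n → EuclideanSpace ℝ (Fin d)) (js : ℕ → Fin n) :
    ℕ → Fin n → EuclideanSpace ℝ (Fin d)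
  | 0 => φ0
  | k + 1 =>
      Function.update (pfIter d n z φ0 js k) (js k)
        (z (pfIter d n z φ0 js k) (js k))

/-- Extends a finite index sequence to an infinite one (the tail is irrelevant). -/
def extSeq {n : ℕ} (hn : 0 < n) {k : ℕ} (js : Fin k → Fin n) : ℕ → Fin n :=
  fun t => if h : t < k then js ⟨t, h⟩ else ⟨0, hn⟩


open scoped RealInnerProductSpace

lemma pf_quad_zero {E : Type*} [NormedAddCommGroup E] [InnerProductSpace ℝ E]
    (G : E) (C : ℝ) (hC : 0 ≤ C)
    (h : ∀ t : ℝ, 0 ≤ t * ‖G‖ ^ 2 + C * t ^ 2) : G = 0 := by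
  by_contra hG
  have hpos : 0 < ‖G‖ ^ 2 := by
    have : ‖G‖ ≠ 0 := by simpa using hG
    positivity
  set a := ‖G‖ ^ 2 with ha
  have h1 := h (-(a / (C + 1)))
  have hC1 : (0:ℝ) < C + 1 := by linarith
  have key : -(a / (C + 1)) * a + C * (-(a / (C + 1))) ^ 2 = -(a ^ 2 / (C + 1) ^ 2) := by
    field_simp
    ring
  rw [key] at h1
  have : (0:ℝ) < a ^ 2 / (C + 1) ^ 2 := by positivity
  linarith

lemma pf_descent {E : Type*} [NormedAddCommGroup E] [InnerProductSpace ℝ E] [CompleteSpace E]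
    (g : E → ℝ) (g' : E → E) (L : ℝ)
    (hg : ∀ x, HasGradientAt g (g' x) x)
    (hL : ∀ x y, ‖g' x - g' y‖ ≤ L * ‖x - y‖) (x y : E) :
    g x ≤ g y + ⟪g' y, x - y⟫ + L / 2 * ‖x - y‖ ^ 2 := by
  set v := x - y with hv
  have hline : ∀ t : ℝ, HasDerivAt (fun t : ℝ => y + t • v) v t := by
    intro t
    simpa using ((hasDerivAt_id t).smul_const v).const_add y
  have hcomp : ∀ t : ℝ, HasDerivAt (fun t : ℝ => g (y + t • v)) ⟪g' (y + t • v), v⟫ t := by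
    intro t
    have h1 := ((hg (y + t • v)).hasFDerivAt).comp_hasDerivAt t (hline t)
    simp only [InnerProductSpace.toDual_apply_apply] at h1
    exact h1
  set h : ℝ → ℝ := fun t => g y + t * ⟪g' y, v⟫ + L / 2 * t ^ 2 * ‖v‖ ^ 2 - g (y + t • v) with hh
  have hder : ∀ t : ℝ, HasDerivAt h
      (⟪g' y, v⟫ + L * t * ‖v‖ ^ 2 - ⟪g' (y + t • v), v⟫) t := by
    intro t
    have h1 : HasDerivAt (fun t : ℝ => t * ⟪g' y, v⟫) ⟪g' y, v⟫ t := by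
      simpa using (hasDerivAt_id t).mul_const (⟪g' y, v⟫ : ℝ)
    have h2 : HasDerivAt (fun t : ℝ => L / 2 * t ^ 2 * ‖v‖ ^ 2) (L * t * ‖v‖ ^ 2) t := by
      have h3 := ((hasDerivAt_pow 2 t).const_mul (L / 2)).mul_const (‖v‖ ^ 2)
      refine h3.congr_deriv ?_
      ring
    have h4 := ((h1.const_add (g y)).add h2).sub (hcomp t)
    exact h4
  have hmono : MonotoneOn h (Set.Icc 0 1) := by
    apply monotoneOn_of_deriv_nonneg (convex_Icc 0 1)
    · exact fun t _ => (hder t).continuousAt.continuousWithinAt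
    · exact fun t _ => (hder t).differentiableAt.differentiableWithinAt
    · intro t ht
      rw [interior_Icc] at ht
      rw [(hder t).deriv]
      have hbd : ‖g' (y + t • v) - g' y‖ ≤ L * (t * ‖v‖) := by
        have h5 := hL (y + t • v) y
        simpa [norm_smul, abs_of_nonneg (le_of_lt ht.1)] using h5
      have hinner : ⟪g' y, v⟫ - ⟪g' (y + t • v), v⟫ = -⟪g' (y + t • v) - g' y, v⟫ := by
        rw [inner_sub_left]; ring
      have h6 := abs_real_inner_le_norm (g' (y + t • v) - g' y) v
      have h8 : ‖g' (y + t • v) - g' y‖ * ‖v‖ ≤ L * (t * ‖v‖) * ‖v‖ :=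
        mul_le_mul_of_nonneg_right hbd (norm_nonneg v)
      have h9 := le_abs_self (⟪g' (y + t • v) - g' y, v⟫ : ℝ)
      have h10 : (L * (t * ‖v‖) * ‖v‖ : ℝ) = L * t * ‖v‖ ^ 2 := by ring
      nlinarith
  have h01 := hmono (Set.mem_Icc.mpr ⟨le_refl 0, zero_le_one⟩)
      (Set.mem_Icc.mpr ⟨zero_le_one, le_refl 1⟩) zero_le_one
  have h0 : h 0 = 0 := by simp [hh]
  have h1v : h 1 = g y + ⟪g' y, v⟫ + L / 2 * ‖v‖ ^ 2 - g x := by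
    simp [hh, hv]
  rw [h0, h1v] at h01
  linarith

section PF

variable {d n : ℕ} {μ : ℝ}
  {f : Fin n → EuclideanSpace ℝ (Fin d) → ℝ}
  {f' : Fin n → EuclideanSpace ℝ (Fin d) → EuclideanSpace ℝ (Fin d)}


lemma pfL_expand (φ : Fin n → (EuclideanSpace ℝ (Fin d))) (i : Fin n) (x y : (EuclideanSpace ℝ (Fin d))) :
    pfL d n μ f f' φ i x = pfL d n μ f f' φ i y
      + ⟪f' i (φ i) + μ • (y - φ i), x - y⟫ + μ / 2 * ‖x - y‖ ^ 2 := by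
  have hd : x - φ i = (x - y) + (y - φ i) := by abel
  rw [pfL, pfL, hd, norm_add_sq_real, inner_add_right, inner_add_left, real_inner_smul_left,
      real_inner_comm (y - φ i) (x - y)]
  ring

lemma pfL_self (φ : Fin n → (EuclideanSpace ℝ (Fin d))) (i : Fin n) :
    pfL d n μ f f' φ i (φ i) = f i (φ i) := by
  simp [pfL]

lemma pfL_update_self (φ : Fin n → (EuclideanSpace ℝ (Fin d))) (j : Fin n) (y x : (EuclideanSpace ℝ (Fin d))) :
    pfL d n μ f f' (Function.update φ j y) j x
      = f j y + ⟪f' j y, x - y⟫ + μ / 2 * ‖x - y‖ ^ 2 := by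
  simp [pfL]

lemma pfL_update_other (φ : Fin n → (EuclideanSpace ℝ (Fin d))) {i j : Fin n} (hij : i ≠ j) (y x : (EuclideanSpace ℝ (Fin d))) :
    pfL d n μ f f' (Function.update φ j y) i x = pfL d n μ f f' φ i x := by
  simp [pfL, Function.update_of_ne hij]

lemma pfW_key (hn : (n:ℝ) ≠ 0) (hμ : μ ≠ 0) (φ : Fin n → (EuclideanSpace ℝ (Fin d))) :
    ∑ i, (f' i (φ i) + μ • (pfW d n μ f' φ - φ i)) = 0 := by
  rw [Finset.sum_add_distrib, ← Finset.smul_sum, Finset.sum_sub_distrib, Finset.sum_const,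
      Finset.card_univ, Fintype.card_fin, pfW]
  match_scalars <;> field_simp <;> ring

lemma pfB_quad (hn : (n:ℝ) ≠ 0) (hμ : μ ≠ 0) (φ : Fin n → (EuclideanSpace ℝ (Fin d))) (x : (EuclideanSpace ℝ (Fin d))) :
    pfB d n μ f f' φ x
      = pfB d n μ f f' φ (pfW d n μ f' φ) + μ / 2 * ‖x - pfW d n μ f' φ‖ ^ 2 := by
  set w := pfW d n μ f' φ with hw
  have h1 : ∀ i ∈ Finset.univ, pfL d n μ f f' φ i x = pfL d n μ f f' φ i w
      + (⟪f' i (φ i) + μ • (w - φ i), x - w⟫ + μ / 2 * ‖x - w‖ ^ 2) := by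
    intro i _
    rw [pfL_expand φ i x w]; ring
  rw [pfB, Finset.sum_congr rfl h1, Finset.sum_add_distrib, Finset.sum_add_distrib,
      ← sum_inner, pfW_key hn hμ φ, Finset.sum_const, Finset.card_univ, Fintype.card_fin]
  have : (⟪(0 : (EuclideanSpace ℝ (Fin d))), x - w⟫ : ℝ) = 0 := inner_zero_left _
  rw [this, pfB]
  push_cast
  field_simp
  ring

lemma pfB_min (hn : (n:ℝ) ≠ 0) (hμ : 0 < μ) (φ : Fin n → (EuclideanSpace ℝ (Fin d))) (x : (EuclideanSpace ℝ (Fin d))) :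
    pfB d n μ f f' φ (pfW d n μ f' φ) ≤ pfB d n μ f f' φ x := by
  rw [pfB_quad hn hμ.ne' φ x]
  have : 0 ≤ μ / 2 * ‖x - pfW d n μ f' φ‖ ^ 2 := by positivity
  linarith

lemma pfB_erase (φ : Fin n → (EuclideanSpace ℝ (Fin d))) (j : Fin n) (x : (EuclideanSpace ℝ (Fin d))) :
    pfB d n μ f f' φ x = (1 / (n:ℝ)) * (pfL d n μ f f' φ j x
      + ∑ i ∈ Finset.univ.erase j, pfL d n μ f f' φ i x) := by
  rw [pfB, ← Finset.add_sum_erase _ _ (Finset.mem_univ j)]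

lemma pfW_update (hn : (n:ℝ) ≠ 0) (hμ : μ ≠ 0) (φ : Fin n → (EuclideanSpace ℝ (Fin d))) (j : Fin n) (y : (EuclideanSpace ℝ (Fin d))) :
    pfW d n μ f' (Function.update φ j y)
      = pfW d n μ f' φ + (1 / (n:ℝ)) • (y - φ j)
        - (1 / (μ * n)) • (f' j y - f' j (φ j)) := by
  have h1 : ∑ i, Function.update φ j y i = ∑ i, φ i + (y - φ j) := by
    rw [Finset.sum_update_of_mem (Finset.mem_univ j), Finset.sdiff_singleton_eq_erase,
        Finset.sum_erase_eq_sub (Finset.mem_univ j)]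
    abel
  have h2 : ∑ i, f' i (Function.update φ j y i)
      = ∑ i, f' i (φ i) + (f' j y - f' j (φ j)) := by
    rw [← Finset.add_sum_erase _ (fun i => f' i (Function.update φ j y i)) (Finset.mem_univ j),
        ← Finset.add_sum_erase _ (fun i => f' i (φ i)) (Finset.mem_univ j),
        Function.update_self]
    have h3 : ∀ i ∈ Finset.univ.erase j, f' i (Function.update φ j y i) = f' i (φ i) := by
      intro i hi
      rw [Function.update_of_ne (Finset.ne_of_mem_erase hi)]
    rw [Finset.sum_congr rfl h3]
    abel
  rw [pfW, pfW, h1, h2]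
  match_scalars <;> field_simp



noncomputable def pfQ (d n : ℕ) (μ : ℝ)
    (f' : Fin n → EuclideanSpace ℝ (Fin d) → EuclideanSpace ℝ (Fin d))
    (φ : Fin n → EuclideanSpace ℝ (Fin d)) (j : Fin n)
    (x : EuclideanSpace ℝ (Fin d)) : EuclideanSpace ℝ (Fin d) :=
  f' j x - f' j (φ j) - μ • (x - φ j)

noncomputable def pfE (d n : ℕ) (μ : ℝ)
    (f : Fin n → EuclideanSpace ℝ (Fin d) → ℝ)
    (f' : Fin n → EuclideanSpace ℝ (Fin d) → EuclideanSpace ℝ (Fin d))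
    (φ : Fin n → EuclideanSpace ℝ (Fin d)) (j : Fin n)
    (x : EuclideanSpace ℝ (Fin d)) : ℝ :=
  f j x - pfL d n μ f f' φ j x

section PE

variable {d n : ℕ} {μ : ℝ} {L : Fin n → ℝ}
  {f : Fin n → EuclideanSpace ℝ (Fin d) → ℝ}
  {f' : Fin n → EuclideanSpace ℝ (Fin d) → EuclideanSpace ℝ (Fin d)}


lemma pfE_conv (hsc : ∀ i x y, f i x ≥ f i y + ⟪f' i y, x - y⟫ + μ / 2 * ‖x - y‖ ^ 2)
    (φ : Fin n → (EuclideanSpace ℝ (Fin d))) (j : Fin n) (a b : (EuclideanSpace ℝ (Fin d))) :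
    pfE d n μ f f' φ j a + ⟪pfQ d n μ f' φ j a, b - a⟫ ≤ pfE d n μ f f' φ j b := by
  have h1 := hsc j b a
  have h2 := pfL_expand (μ := μ) (f := f) (f' := f') φ j b a
  have h3 : (⟪pfQ d n μ f' φ j a, b - a⟫ : ℝ)
      = ⟪f' j a, b - a⟫ - ⟪f' j (φ j) + μ • (a - φ j), b - a⟫ := by
    rw [pfQ, inner_add_left, inner_sub_left, inner_sub_left]
    ring
  rw [pfE, pfE, h3, h2]
  linarith

lemma pfE_smooth (hgrad : ∀ i x, HasGradientAt (f i) (f' i x) x)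
    (hsmooth : ∀ i x y, ‖f' i x - f' i y‖ ≤ L i * ‖x - y‖)
    (φ : Fin n → (EuclideanSpace ℝ (Fin d))) (j : Fin n) (a b : (EuclideanSpace ℝ (Fin d))) :
    pfE d n μ f f' φ j b ≤ pfE d n μ f f' φ j a + ⟪pfQ d n μ f' φ j a, b - a⟫
      + (L j - μ) / 2 * ‖b - a‖ ^ 2 := by
  have h1 := pf_descent (f j) (f' j) (L j) (hgrad j) (hsmooth j) b a
  have h2 := pfL_expand (μ := μ) (f := f) (f' := f') φ j b a
  have h3 : (⟪pfQ d n μ f' φ j a, b - a⟫ : ℝ)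
      = ⟪f' j a, b - a⟫ - ⟪f' j (φ j) + μ • (a - φ j), b - a⟫ := by
    rw [pfQ, inner_add_left, inner_sub_left, inner_sub_left]
    ring
  rw [pfE, pfE, h3, h2]
  linarith

lemma pfE_self (φ : Fin n → (EuclideanSpace ℝ (Fin d))) (j : Fin n) : pfE d n μ f f' φ j (φ j) = 0 := by
  rw [pfE, pfL_self, sub_self]

lemma pfQ_self (φ : Fin n → (EuclideanSpace ℝ (Fin d))) (j : Fin n) : pfQ d n μ f' φ j (φ j) = 0 := by
  rw [pfQ]
  simp

lemma pfE_nonneg (hsc : ∀ i x y, f i x ≥ f i y + ⟪f' i y, x - y⟫ + μ / 2 * ‖x - y‖ ^ 2)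
    (φ : Fin n → (EuclideanSpace ℝ (Fin d))) (j : Fin n) (x : (EuclideanSpace ℝ (Fin d))) : 0 ≤ pfE d n μ f f' φ j x := by
  have h1 := pfE_conv hsc φ j (φ j) x
  rw [pfE_self, pfQ_self] at h1
  simpa using h1

lemma pfE_coco (hgrad : ∀ i x, HasGradientAt (f i) (f' i x) x)
    (hsmooth : ∀ i x y, ‖f' i x - f' i y‖ ≤ L i * ‖x - y‖)
    (hsc : ∀ i x y, f i x ≥ f i y + ⟪f' i y, x - y⟫ + μ / 2 * ‖x - y‖ ^ 2)
    (φ : Fin n → (EuclideanSpace ℝ (Fin d))) (j : Fin n) (x : (EuclideanSpace ℝ (Fin d))) (hK : 0 < L j - μ) :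
    ‖pfQ d n μ f' φ j x‖ ^ 2 ≤ 2 * (L j - μ) * pfE d n μ f f' φ j x := by
  set K := L j - μ with hKdef
  set q := pfQ d n μ f' φ j x with hq
  have h0 := pfE_nonneg hsc φ j (x - (1 / K) • q)
  have h1 := pfE_smooth (μ := μ) hgrad hsmooth φ j x (x - (1 / K) • q)
  have h2 : x - (1 / K) • q - x = -((1 / K) • q) := by abel
  rw [h2] at h1
  have h3 : (⟪q, -((1 / K) • q)⟫ : ℝ) = -((1 / K) * ‖q‖ ^ 2) := by
    rw [inner_neg_right, real_inner_smul_right, real_inner_self_eq_norm_sq]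
  have h4 : ‖-((1 / K) • q)‖ ^ 2 = (1 / K) ^ 2 * ‖q‖ ^ 2 := by
    rw [norm_neg, norm_smul, Real.norm_eq_abs, mul_pow, sq_abs]
  rw [h3, h4] at h1
  have hK0 : K ≠ 0 := ne_of_gt hK
  have h5 : K / 2 * ((1 / K) ^ 2 * ‖q‖ ^ 2) = ‖q‖ ^ 2 / (2 * K) := by
    field_simp
  rw [h5] at h1
  have h6 : (1 / K) * ‖q‖ ^ 2 - ‖q‖ ^ 2 / (2 * K) = ‖q‖ ^ 2 / (2 * K) := by
    field_simp
    ring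
  have h7 : ‖q‖ ^ 2 / (2 * K) ≤ pfE d n μ f f' φ j x := by linarith
  have h8 := (div_le_iff₀ (by positivity : (0:ℝ) < 2 * K)).mp h7
  nlinarith [h8]

lemma pfE_coco_pair (hgrad : ∀ i x, HasGradientAt (f i) (f' i x) x)
    (hsmooth : ∀ i x y, ‖f' i x - f' i y‖ ≤ L i * ‖x - y‖)
    (hsc : ∀ i x y, f i x ≥ f i y + ⟪f' i y, x - y⟫ + μ / 2 * ‖x - y‖ ^ 2)
    (φ : Fin n → (EuclideanSpace ℝ (Fin d))) (j : Fin n) (a b : (EuclideanSpace ℝ (Fin d))) (hK : 0 < L j - μ) :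
    pfE d n μ f f' φ j a + ⟪pfQ d n μ f' φ j a, b - a⟫
      + 1 / (2 * (L j - μ)) * ‖pfQ d n μ f' φ j b - pfQ d n μ f' φ j a‖ ^ 2
      ≤ pfE d n μ f f' φ j b := by
  set K := L j - μ with hKdef
  set qa := pfQ d n μ f' φ j a with hqa
  set qb := pfQ d n μ f' φ j b with hqb
  set D := qb - qa with hD
  set x0 := b - (1 / K) • D with hx0
  have hconv := pfE_conv hsc φ j a x0
  have hsm := pfE_smooth (μ := μ) hgrad hsmooth φ j b x0
  have h2 : x0 - b = -((1 / K) • D) := by rw [hx0]; abel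
  have h3 : x0 - a = (b - a) - (1 / K) • D := by rw [hx0]; abel
  rw [h2] at hsm
  rw [h3] at hconv
  have h4 : (⟪qa, b - a - (1 / K) • D⟫ : ℝ) = ⟪qa, b - a⟫ - (1 / K) * ⟪qa, D⟫ := by
    rw [inner_sub_right, real_inner_smul_right]
  have h5 : (⟪qb, -((1 / K) • D)⟫ : ℝ) = -((1 / K) * ⟪qb, D⟫) := by
    rw [inner_neg_right, real_inner_smul_right]
  have h6 : ‖-((1 / K) • D)‖ ^ 2 = (1 / K) ^ 2 * ‖D‖ ^ 2 := by
    rw [norm_neg, norm_smul, Real.norm_eq_abs, mul_pow, sq_abs]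
  rw [h4] at hconv
  rw [h5, h6] at hsm
  have h7 : (⟪qb, D⟫ : ℝ) - ⟪qa, D⟫ = ‖D‖ ^ 2 := by
    rw [← inner_sub_left, ← hD, real_inner_self_eq_norm_sq]
  have hK0 : K ≠ 0 := ne_of_gt hK
  have h8 : K / 2 * ((1 / K) ^ 2 * ‖D‖ ^ 2) = ‖D‖ ^ 2 / (2 * K) := by
    field_simp
  rw [h8] at hsm
  have h9 : 1 / (2 * K) * ‖D‖ ^ 2 = ‖D‖ ^ 2 / (2 * K) := by ring
  have h10 : (1 / K) * ⟪qb, D⟫ - (1 / K) * ⟪qa, D⟫ = (1 / K) * ‖D‖ ^ 2 := by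
    rw [← mul_sub, h7]
  have h11 : (1 / K) * ‖D‖ ^ 2 - ‖D‖ ^ 2 / (2 * K) = ‖D‖ ^ 2 / (2 * K) := by
    field_simp
    ring
  rw [h9]
  linarith

lemma pfE_zero_of_eq (hgrad : ∀ i x, HasGradientAt (f i) (f' i x) x)
    (hsmooth : ∀ i x y, ‖f' i x - f' i y‖ ≤ L i * ‖x - y‖)
    (hsc : ∀ i x y, f i x ≥ f i y + ⟪f' i y, x - y⟫ + μ / 2 * ‖x - y‖ ^ 2)
    (φ : Fin n → (EuclideanSpace ℝ (Fin d))) (j : Fin n) (hK : L j = μ) (x : (EuclideanSpace ℝ (Fin d))) :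
    pfE d n μ f f' φ j x = 0 := by
  have h1 := pfE_smooth (μ := μ) hgrad hsmooth φ j (φ j) x
  rw [pfE_self, pfQ_self, hK] at h1
  have h2 := pfE_nonneg hsc φ j x
  simp only [inner_zero_left, sub_self, zero_div, zero_mul, zero_add, add_zero] at h1
  linarith

lemma pfQ_zero_of_eq (hgrad : ∀ i x, HasGradientAt (f i) (f' i x) x)
    (hsmooth : ∀ i x y, ‖f' i x - f' i y‖ ≤ L i * ‖x - y‖)
    (hsc : ∀ i x y, f i x ≥ f i y + ⟪f' i y, x - y⟫ + μ / 2 * ‖x - y‖ ^ 2)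
    (φ : Fin n → (EuclideanSpace ℝ (Fin d))) (j : Fin n) (hK : L j = μ) (x : (EuclideanSpace ℝ (Fin d))) :
    pfQ d n μ f' φ j x = 0 := by
  have h1 := pfE_smooth (μ := μ) hgrad hsmooth φ j x (x - pfQ d n μ f' φ j x)
  rw [pfE_zero_of_eq hgrad hsmooth hsc φ j hK, pfE_zero_of_eq hgrad hsmooth hsc φ j hK, hK] at h1
  have h2 : x - pfQ d n μ f' φ j x - x = -(pfQ d n μ f' φ j x) := by abel
  rw [h2] at h1
  simp only [inner_neg_right, real_inner_self_eq_norm_sq, sub_self, zero_div, zero_mul,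
    add_zero, zero_add] at h1
  have h3 : ‖pfQ d n μ f' φ j x‖ ^ 2 ≤ 0 := by linarith
  have h4 : ‖pfQ d n μ f' φ j x‖ = 0 := by nlinarith [norm_nonneg (pfQ d n μ f' φ j x)]
  simpa using h4

end PE


section OPT

variable {d n : ℕ} {μ : ℝ} {L : Fin n → ℝ}
  {f : Fin n → EuclideanSpace ℝ (Fin d) → ℝ}
  {f' : Fin n → EuclideanSpace ℝ (Fin d) → EuclideanSpace ℝ (Fin d)}

lemma pf_opt_grad {j : Fin n} (hn : 0 < n) (hμ : 0 < μ) (hLj : μ ≤ L j)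
    (hgrad : ∀ x, HasGradientAt (f j) (f' j x) x)
    (hsmooth : ∀ x y, ‖f' j x - f' j y‖ ≤ L j * ‖x - y‖)
    (φ : Fin n → EuclideanSpace ℝ (Fin d)) (z0 : EuclideanSpace ℝ (Fin d))
    (hz0 : ∀ y, (1 / (n:ℝ)) * f j z0
        + (1 / (n:ℝ)) * ∑ i ∈ Finset.univ.erase j, pfL d n μ f f' φ i z0
      ≤ (1 / (n:ℝ)) * f j y
        + (1 / (n:ℝ)) * ∑ i ∈ Finset.univ.erase j, pfL d n μ f f' φ i y) :
    (1 / (n:ℝ)) • f' j z0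
      + (1 / (n:ℝ)) • ∑ i ∈ Finset.univ.erase j, (f' i (φ i) + μ • (z0 - φ i)) = 0 := by
  set SumVec := ∑ i ∈ Finset.univ.erase j, (f' i (φ i) + μ • (z0 - φ i)) with hSV
  set Gv : EuclideanSpace ℝ (Fin d) := (1 / (n:ℝ)) • f' j z0 + (1 / (n:ℝ)) • SumVec with hGv
  set a := ‖Gv‖ ^ 2 with ha
  have hn' : (0:ℝ) < n := by exact_mod_cast hn
  have ha0 : 0 ≤ a := by positivity
  have hinner : (1 / (n:ℝ)) * ⟪f' j z0, Gv⟫ + (1 / (n:ℝ)) * ⟪SumVec, Gv⟫ = a := by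
    rw [← real_inner_smul_left, ← real_inner_smul_left, ← inner_add_left, ← hGv, ha,
      real_inner_self_eq_norm_sq]
  apply pf_quad_zero Gv ((L j / (2 * n) + μ / 2) * a)
  · have : 0 < L j := lt_of_lt_of_le hμ hLj
    positivity
  · intro t
    have hy := hz0 (z0 + t • Gv)
    have hcancel : z0 + t • Gv - z0 = t • Gv := by abel
    have hts : ‖t • Gv‖ ^ 2 = t ^ 2 * a := by
      rw [norm_smul, Real.norm_eq_abs, mul_pow, sq_abs, ha]
    have h2 : f j (z0 + t • Gv) ≤ f j z0 + t * ⟪f' j z0, Gv⟫ + L j / 2 * (t ^ 2 * a) := by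
      have := pf_descent (f j) (f' j) (L j) hgrad hsmooth (z0 + t • Gv) z0
      rw [hcancel, hts, real_inner_smul_right] at this
      linarith
    set c := ((Finset.univ.erase j).card : ℝ) with hc
    have hcn : c ≤ (n:ℝ) := by
      rw [hc]
      have h := Finset.card_le_univ (Finset.univ.erase j)
      simp only [Finset.card_univ, Fintype.card_fin] at h
      exact_mod_cast h
    have hc0 : 0 ≤ c := by
      rw [hc]
      exact Nat.cast_nonneg _
    have h3 : ∑ i ∈ Finset.univ.erase j, pfL d n μ f f' φ i (z0 + t • Gv)
        = ∑ i ∈ Finset.univ.erase j, pfL d n μ f f' φ i z0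
          + (t * ⟪SumVec, Gv⟫ + c * (μ / 2 * (t ^ 2 * a))) := by
      have hterm : ∀ i ∈ Finset.univ.erase j,
          pfL d n μ f f' φ i (z0 + t • Gv)
            = pfL d n μ f f' φ i z0
              + (⟪f' i (φ i) + μ • (z0 - φ i), t • Gv⟫ + μ / 2 * (t ^ 2 * a)) := by
        intro i _
        have := pfL_expand (μ := μ) (f := f) (f' := f') φ i (z0 + t • Gv) z0
        rw [hcancel, hts] at this
        rw [this]
        ring
      rw [Finset.sum_congr rfl hterm, Finset.sum_add_distrib, Finset.sum_add_distrib,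
        ← sum_inner, Finset.sum_const, ← hSV]
      rw [real_inner_smul_right, nsmul_eq_mul, ← hc]
      try ring
    rw [h3] at hy
    have h1n : (0:ℝ) ≤ 1 / n := by positivity
    have h2' := mul_le_mul_of_nonneg_left h2 h1n
    have hkey : 0 ≤ (1 - c / (n:ℝ)) * (μ / 2 * (t ^ 2 * a)) := by
      apply mul_nonneg
      · rw [sub_nonneg, div_le_one hn']
        exact hcn
      · positivity
    have hGvt : (1 / (n:ℝ)) * (t * ⟪f' j z0, Gv⟫) + (1 / (n:ℝ)) * (t * ⟪SumVec, Gv⟫)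
        = t * a := by
      linear_combination t * hinner
    have hcm : (1 / (n:ℝ)) * (c * (μ / 2 * (t ^ 2 * a)))
        = (c / (n:ℝ)) * (μ / 2 * (t ^ 2 * a)) := by ring
    rw [← ha]
    have hC : (L j / (2 * (n:ℝ)) + μ / 2) * a * t ^ 2
        = 1 / (n:ℝ) * (L j / 2 * (t ^ 2 * a)) + μ / 2 * (t ^ 2 * a) := by
      field_simp
    rw [hC]
    linarith [hy, h2', hkey, hGvt, hcm]

lemma pf_star_grad (hn : 0 < n) (hμ : 0 < μ) (hμL : ∀ i, μ ≤ L i)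
    (hgrad : ∀ i x, HasGradientAt (f i) (f' i x) x)
    (hsmooth : ∀ i x y, ‖f' i x - f' i y‖ ≤ L i * ‖x - y‖)
    (wstar : EuclideanSpace ℝ (Fin d))
    (hstar : ∀ x, (1 / (n : ℝ)) * ∑ i, f i wstar ≤ (1 / (n : ℝ)) * ∑ i, f i x) :
    ∑ i, f' i wstar = 0 := by
  set Gv : EuclideanSpace ℝ (Fin d) := ∑ i, f' i wstar with hGv
  set a := ‖Gv‖ ^ 2 with ha
  have hn' : (0:ℝ) < n := by exact_mod_cast hn
  have hL0 : (0:ℝ) ≤ ∑ i, L i :=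
    Finset.sum_nonneg fun i _ => le_of_lt (lt_of_lt_of_le hμ (hμL i))
  apply pf_quad_zero Gv ((∑ i, L i) / 2 * a)
  · positivity
  · intro t
    have hy := hstar (wstar + t • Gv)
    have hcancel : wstar + t • Gv - wstar = t • Gv := by abel
    have hts : ‖t • Gv‖ ^ 2 = t ^ 2 * a := by
      rw [norm_smul, Real.norm_eq_abs, mul_pow, sq_abs, ha]
    have h3 : ∑ i, f i (wstar + t • Gv)
        ≤ ∑ i, f i wstar + (t * a + (∑ i, L i) / 2 * (t ^ 2 * a)) := by
      have hterm : ∀ i ∈ Finset.univ,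
          f i (wstar + t • Gv) ≤ f i wstar + (t * ⟪f' i wstar, Gv⟫ + L i * (t ^ 2 * a / 2)) := by
        intro i _
        have := pf_descent (f i) (f' i) (L i) (hgrad i) (hsmooth i) (wstar + t • Gv) wstar
        rw [hcancel, hts, real_inner_smul_right] at this
        linarith
      have hsum := Finset.sum_le_sum hterm
      rw [Finset.sum_add_distrib, Finset.sum_add_distrib] at hsum
      have e1 : ∑ i, t * ⟪f' i wstar, Gv⟫ = t * a := by
        rw [← Finset.mul_sum, ← sum_inner, ← hGv, ha, real_inner_self_eq_norm_sq]
      have e2 : ∑ i, L i * (t ^ 2 * a / 2) = (∑ i, L i) / 2 * (t ^ 2 * a) := by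
        rw [← Finset.sum_mul]
        ring
      rw [e1, e2] at hsum
      linarith
    have h1n : (0:ℝ) < 1 / n := by positivity
    have hy2 : ∑ i, f i wstar ≤ ∑ i, f i (wstar + t • Gv) := by
      have := (mul_le_mul_iff_right₀ h1n).mp hy
      linarith
    have heq : (∑ i, L i) / 2 * a * t ^ 2 = (∑ i, L i) / 2 * (t ^ 2 * a) := by ring
    rw [heq, ← ha]
    linarith

lemma pf_w_update_eq (hn : 0 < n) (hμ : 0 < μ) {j : Fin n} (hLj : μ ≤ L j)
    (hgrad : ∀ x, HasGradientAt (f j) (f' j x) x)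
    (hsmooth : ∀ x y, ‖f' j x - f' j y‖ ≤ L j * ‖x - y‖)
    (φ : Fin n → EuclideanSpace ℝ (Fin d)) (z0 : EuclideanSpace ℝ (Fin d))
    (hz0 : ∀ y, (1 / (n:ℝ)) * f j z0
        + (1 / (n:ℝ)) * ∑ i ∈ Finset.univ.erase j, pfL d n μ f f' φ i z0
      ≤ (1 / (n:ℝ)) * f j y
        + (1 / (n:ℝ)) * ∑ i ∈ Finset.univ.erase j, pfL d n μ f f' φ i y) :
    pfW d n μ f' (Function.update φ j z0) = z0 := by
  have hn' : (n:ℝ) ≠ 0 := by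
    have : (0:ℝ) < n := by exact_mod_cast hn
    exact ne_of_gt this
  have hμ' : μ ≠ 0 := ne_of_gt hμ
  have hGv := pf_opt_grad hn hμ hLj hgrad hsmooth φ z0 hz0
  have herase : ∑ i ∈ Finset.univ.erase j, (f' i (φ i) + μ • (z0 - φ i))
      = ∑ i, (f' i (φ i) + μ • (z0 - φ i)) - (f' j (φ j) + μ • (z0 - φ j)) :=
    Finset.sum_erase_eq_sub (Finset.mem_univ j)
  have hfull : ∑ i, (f' i (φ i) + μ • (z0 - φ i))
      = ∑ i, f' i (φ i) + μ • ((n:ℝ) • z0 - ∑ i, φ i) := by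
    rw [Finset.sum_add_distrib, ← Finset.smul_sum, Finset.sum_sub_distrib, Finset.sum_const,
      Finset.card_univ, Fintype.card_fin]
    congr 2
    rw [← Nat.cast_smul_eq_nsmul ℝ]
  rw [herase, hfull] at hGv
  rw [pfW_update hn' hμ' φ j z0, pfW]
  have key : (1 / (n:ℝ)) • ∑ i, φ i - (1 / (μ * n)) • ∑ i, f' i (φ i)
        + (1 / (n:ℝ)) • (z0 - φ j) - (1 / (μ * n)) • (f' j z0 - f' j (φ j)) - z0
      + (1/μ) • ((1 / (n:ℝ)) • f' j z0
        + (1 / (n:ℝ)) • (∑ i, f' i (φ i) + μ • ((n:ℝ) • z0 - ∑ i, φ i)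
            - (f' j (φ j) + μ • (z0 - φ j)))) = 0 := by
    match_scalars <;> (field_simp; try ring)
  rw [hGv] at key
  simp only [smul_zero, add_zero] at key
  exact sub_eq_zero.mp key

end OPT


lemma pf_perj_scalar (μ nr K c p ε E Is I A Bx : ℝ)
    (hμ : 0 < μ) (hn : 0 < nr) (hK : 0 < K) (hc : 0 ≤ c)
    (hp : p = c * (μ * nr + K) / (μ * nr))
    (hS1 : (μ * nr) ^ 2 * A ≤ 2 * K * E)
    (hS2 : ε + (I - Is) + 1 / (2 * K) * ((μ * nr) ^ 2 * A + 2 * (μ * nr) * I + Bx) ≤ E)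
    (hSQ2 : 0 ≤ Bx + 2 * (K + μ * nr) * I + (K + μ * nr) ^ 2 * A) :
    c / nr * ε - c / nr * Is ≤ p * (μ / 2 * A + 1 / nr * E) := by
  have hT : p * (μ / 2 * A + 1 / nr * E) - (c / nr * ε - c / nr * Is)
      = c / nr * (E - (ε + (I - Is)
            + 1 / (2 * K) * ((μ * nr) ^ 2 * A + 2 * (μ * nr) * I + Bx)))
        + c * K / (μ * nr ^ 2) * ((2 * K * E - (μ * nr) ^ 2 * A) / (2 * K))
        + c / (2 * nr * K) * (Bx + 2 * (K + μ * nr) * I + (K + μ * nr) ^ 2 * A) := by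
    rw [hp]
    field_simp
    ring
  have h1 : 0 ≤ c / nr * (E - (ε + (I - Is)
      + 1 / (2 * K) * ((μ * nr) ^ 2 * A + 2 * (μ * nr) * I + Bx))) :=
    mul_nonneg (by positivity) (by linarith)
  have h2 : 0 ≤ c * K / (μ * nr ^ 2) * ((2 * K * E - (μ * nr) ^ 2 * A) / (2 * K)) :=
    mul_nonneg (by positivity) (div_nonneg (by linarith) (by positivity))
  have h3 : 0 ≤ c / (2 * nr * K) * (Bx + 2 * (K + μ * nr) * I + (K + μ * nr) ^ 2 * A) :=
    mul_nonneg (by positivity) hSQ2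
  linarith

section PJ

variable {d n : ℕ} {μ : ℝ} {L : Fin n → ℝ}
  {f : Fin n → EuclideanSpace ℝ (Fin d) → ℝ}
  {f' : Fin n → EuclideanSpace ℝ (Fin d) → EuclideanSpace ℝ (Fin d)}

lemma pf_q_rel (hn : 0 < n) (hμ : 0 < μ) {j : Fin n} (hLj : μ ≤ L j)
    (hgrad : ∀ x, HasGradientAt (f j) (f' j x) x)
    (hsmooth : ∀ x y, ‖f' j x - f' j y‖ ≤ L j * ‖x - y‖)
    (φ : Fin n → EuclideanSpace ℝ (Fin d)) (z0 : EuclideanSpace ℝ (Fin d))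
    (hz0 : ∀ y, (1 / (n:ℝ)) * f j z0
        + (1 / (n:ℝ)) * ∑ i ∈ Finset.univ.erase j, pfL d n μ f f' φ i z0
      ≤ (1 / (n:ℝ)) * f j y
        + (1 / (n:ℝ)) * ∑ i ∈ Finset.univ.erase j, pfL d n μ f f' φ i y) :
    pfQ d n μ f' φ j z0 = -((μ * (n:ℝ)) • (z0 - pfW d n μ f' φ)) := by
  have hn' : (n:ℝ) ≠ 0 := by
    have : (0:ℝ) < n := by exact_mod_cast hn
    exact ne_of_gt this
  have hμ' : μ ≠ 0 := ne_of_gt hμ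
  have hGv := pf_opt_grad hn hμ hLj hgrad hsmooth φ z0 hz0
  have herase : ∑ i ∈ Finset.univ.erase j, (f' i (φ i) + μ • (z0 - φ i))
      = ∑ i, (f' i (φ i) + μ • (z0 - φ i)) - (f' j (φ j) + μ • (z0 - φ j)) :=
    Finset.sum_erase_eq_sub (Finset.mem_univ j)
  have hfull : ∑ i, (f' i (φ i) + μ • (z0 - φ i))
      = ∑ i, f' i (φ i) + μ • ((n:ℝ) • z0 - ∑ i, φ i) := by
    rw [Finset.sum_add_distrib, ← Finset.smul_sum, Finset.sum_sub_distrib, Finset.sum_const,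
      Finset.card_univ, Fintype.card_fin]
    congr 2
    rw [← Nat.cast_smul_eq_nsmul ℝ]
  rw [herase, hfull] at hGv
  have key : pfQ d n μ f' φ j z0 + (μ * (n:ℝ)) • (z0 - pfW d n μ f' φ)
      = (n:ℝ) • ((1 / (n:ℝ)) • f' j z0
        + (1 / (n:ℝ)) • (∑ i, f' i (φ i) + μ • ((n:ℝ) • z0 - ∑ i, φ i)
            - (f' j (φ j) + μ • (z0 - φ j)))) := by
    rw [pfQ, pfW]
    match_scalars <;> (field_simp; try ring; try tauto)
  rw [hGv, smul_zero] at key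
  exact eq_neg_of_add_eq_zero_left key

lemma pf_perj (hn : 0 < n) (hμ : 0 < μ) (hμL : ∀ i, μ ≤ L i)
    (hgrad : ∀ i x, HasGradientAt (f i) (f' i x) x)
    (hsmooth : ∀ i x y, ‖f' i x - f' i y‖ ≤ L i * ‖x - y‖)
    (hsc : ∀ i x y, f i x ≥ f i y + ⟪f' i y, x - y⟫ + μ / 2 * ‖x - y‖ ^ 2)
    (φ : Fin n → EuclideanSpace ℝ (Fin d)) (j : Fin n)
    (wstar z0 : EuclideanSpace ℝ (Fin d))
    (hz0 : ∀ y, (1 / (n:ℝ)) * f j z0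
        + (1 / (n:ℝ)) * ∑ i ∈ Finset.univ.erase j, pfL d n μ f f' φ i z0
      ≤ (1 / (n:ℝ)) * f j y
        + (1 / (n:ℝ)) * ∑ i ∈ Finset.univ.erase j, pfL d n μ f f' φ i y)
    (c p : ℝ) (hc : 0 ≤ c)
    (hp : p * (μ * (n:ℝ)) = c * (μ * (n:ℝ) + (L j - μ))) :
    c / (n:ℝ) * pfE d n μ f f' φ j wstar
        - c / (n:ℝ) * ⟪pfQ d n μ f' φ j wstar, wstar - pfW d n μ f' φ⟫
      ≤ p * (μ / 2 * ‖z0 - pfW d n μ f' φ‖ ^ 2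
          + 1 / (n:ℝ) * pfE d n μ f f' φ j z0) := by
  have hn' : (0:ℝ) < n := by exact_mod_cast hn
  have hμn : 0 < μ * (n:ℝ) := by positivity
  have hKnn : 0 ≤ L j - μ := by linarith [hμL j]
  have hp0 : 0 ≤ p := by
    have h1 : 0 ≤ c * (μ * (n:ℝ) + (L j - μ)) := mul_nonneg hc (by linarith)
    nlinarith [hp, hμn]
  have hq := pf_q_rel hn hμ (hμL j) (hgrad j) (hsmooth j) φ z0 hz0
  rcases eq_or_lt_of_le (hμL j) with hK0 | hK
  · rw [pfE_zero_of_eq (μ := μ) hgrad hsmooth hsc φ j hK0.symm,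
      pfQ_zero_of_eq (μ := μ) hgrad hsmooth hsc φ j hK0.symm]
    simp only [inner_zero_left, mul_zero, sub_zero, zero_sub, neg_zero]
    have hE := pfE_nonneg (μ := μ) hsc φ j z0
    have hnn : 0 ≤ μ / 2 * ‖z0 - pfW d n μ f' φ‖ ^ 2
        + 1 / (n:ℝ) * pfE d n μ f f' φ j z0 :=
      add_nonneg (by positivity) (mul_nonneg (by positivity) hE)
    exact mul_nonneg hp0 hnn
  · have hKpos : 0 < L j - μ := by linarith
    set w := pfW d n μ f' φ with hw
    set u := z0 - w with hu
    set ξ := pfQ d n μ f' φ j wstar with hξ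
    have hnormu : ∀ r : ℝ, ‖r • u‖ ^ 2 = r ^ 2 * ‖u‖ ^ 2 := by
      intro r
      rw [norm_smul, Real.norm_eq_abs, mul_pow, sq_abs]
    have hS1 : (μ * (n:ℝ)) ^ 2 * ‖u‖ ^ 2 ≤ 2 * (L j - μ) * pfE d n μ f f' φ j z0 := by
      have h := pfE_coco hgrad hsmooth hsc φ j z0 hKpos
      rw [hq, norm_neg, hnormu] at h
      linarith
    have hS2 : pfE d n μ f f' φ j wstar + (⟪ξ, u⟫ - ⟪ξ, wstar - w⟫)
        + 1 / (2 * (L j - μ)) * ((μ * (n:ℝ)) ^ 2 * ‖u‖ ^ 2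
            + 2 * (μ * (n:ℝ)) * ⟪ξ, u⟫ + ‖ξ‖ ^ 2)
        ≤ pfE d n μ f f' φ j z0 := by
      have h := pfE_coco_pair hgrad hsmooth hsc φ j wstar z0 hKpos
      rw [hq, ← hξ] at h
      have e1 : z0 - wstar = u - (wstar - w) := by rw [hu]; abel
      rw [e1, inner_sub_right] at h
      have e2 : -((μ * (n:ℝ)) • u) - ξ = -((μ * (n:ℝ)) • u + ξ) := by abel
      rw [e2, norm_neg, norm_add_sq_real, hnormu, real_inner_smul_left] at h
      have hcomm : (⟪u, ξ⟫ : ℝ) = ⟪ξ, u⟫ := real_inner_comm ξ u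
      rw [hcomm] at h
      linarith
    have hSQ2 : 0 ≤ ‖ξ‖ ^ 2 + 2 * ((L j - μ) + μ * (n:ℝ)) * ⟪ξ, u⟫
        + ((L j - μ) + μ * (n:ℝ)) ^ 2 * ‖u‖ ^ 2 := by
      have h := sq_nonneg ‖ξ + ((L j - μ) + μ * (n:ℝ)) • u‖
      rw [norm_add_sq_real, hnormu, real_inner_smul_right] at h
      linarith
    have hpval : p = c * (μ * (n:ℝ) + (L j - μ)) / (μ * (n:ℝ)) := by
      field_simp
      linarith [hp]
    exact pf_perj_scalar μ (n:ℝ) (L j - μ) c p _ _ _ _ _ _ hμ hn' hKpos hc hpval hS1 hS2 hSQ2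

end PJ


section STEP

variable {d n : ℕ} {μ : ℝ} {L : Fin n → ℝ}
  {f : Fin n → EuclideanSpace ℝ (Fin d) → ℝ}
  {f' : Fin n → EuclideanSpace ℝ (Fin d) → EuclideanSpace ℝ (Fin d)}

lemma pf_one_step (hn : 0 < n) (hμ : 0 < μ) (hμL : ∀ i, μ ≤ L i)
    (hgrad : ∀ i x, HasGradientAt (f i) (f' i x) x)
    (hsmooth : ∀ i x y, ‖f' i x - f' i y‖ ≤ L i * ‖x - y‖)
    (hsc : ∀ i x y, f i x ≥ f i y + ⟪f' i y, x - y⟫ + μ / 2 * ‖x - y‖ ^ 2)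
    (wstar : EuclideanSpace ℝ (Fin d))
    (hstar : ∀ x, (1 / (n : ℝ)) * ∑ i, f i wstar ≤ (1 / (n : ℝ)) * ∑ i, f i x)
    (z : (Fin n → EuclideanSpace ℝ (Fin d)) → Fin n → EuclideanSpace ℝ (Fin d))
    (hz : ∀ ψ (j : Fin n) (y : EuclideanSpace ℝ (Fin d)),
      (1 / (n : ℝ)) * f j (z ψ j)
          + (1 / (n : ℝ)) * ∑ i ∈ Finset.univ.erase j, pfL d n μ f f' ψ i (z ψ j)
        ≤ (1 / (n : ℝ)) * f j y
          + (1 / (n : ℝ)) * ∑ i ∈ Finset.univ.erase j, pfL d n μ f f' ψ i y)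
    (φ : Fin n → EuclideanSpace ℝ (Fin d)) :
    (1 / (n : ℝ)) * ∑ i, f i wstar
      - ∑ j, ((((μ * n + L j - μ) / μ) / ∑ i, (μ * n + L i - μ) / μ) *
          pfB d n μ f f' (Function.update φ j (z φ j))
            (pfW d n μ f' (Function.update φ j (z φ j))))
      ≤ (1 - μ / (μ * n + (1 / (n : ℝ)) * ∑ i, L i - μ)) *
          ((1 / (n : ℝ)) * ∑ i, f i wstar - pfB d n μ f f' φ (pfW d n μ f' φ)) := by
  have hn' : (0:ℝ) < n := by exact_mod_cast hn
  have hnne : (n:ℝ) ≠ 0 := ne_of_gt hn'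
  have hμne : μ ≠ 0 := ne_of_gt hμ
  have hn1 : (1:ℝ) ≤ n := by exact_mod_cast hn
  set w := pfW d n μ f' φ with hw
  set Bw := pfB d n μ f f' φ w with hBw
  set s := wstar - w with hs
  set SL := ∑ i, L i with hSL
  have hSLn : (n:ℝ) * μ ≤ SL := by
    rw [hSL]
    calc (n:ℝ) * μ = ∑ _i : Fin n, μ := by
          rw [Finset.sum_const, Finset.card_univ, Fintype.card_fin, nsmul_eq_mul]
      _ ≤ ∑ i, L i := Finset.sum_le_sum fun i _ => hμL i
  have hLμ : μ ≤ (1 / (n:ℝ)) * SL := by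
    rw [div_mul_eq_mul_div, one_mul, le_div_iff₀ hn']
    linarith
  have hden : 0 < μ * (n:ℝ) + (1 / (n:ℝ)) * SL - μ := by nlinarith
  set c := μ / (μ * (n:ℝ) + (1 / (n:ℝ)) * SL - μ) with hcdef
  have hc0 : 0 ≤ c := div_nonneg hμ.le hden.le
  have hc1 : c ≤ 1 := by
    rw [hcdef, div_le_one hden]
    nlinarith
  set Z := ∑ i, (μ * (n:ℝ) + L i - μ) / μ with hZ
  have hZval : Z = (n:ℝ) * (μ * (n:ℝ) + (1 / (n:ℝ)) * SL - μ) / μ := by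
    rw [hZ, ← Finset.sum_div]
    have h1 : ∑ i, (μ * (n:ℝ) + L i - μ) = (n:ℝ) * (μ * (n:ℝ) - μ) + SL := by
      have h2 : ∀ i ∈ Finset.univ, μ * (n:ℝ) + L i - μ = (μ * (n:ℝ) - μ) + L i := by
        intro i _; ring
      rw [Finset.sum_congr rfl h2, Finset.sum_add_distrib, Finset.sum_const,
        Finset.card_univ, Fintype.card_fin, nsmul_eq_mul, hSL]
    rw [h1]
    field_simp
    ring
  have hZpos : 0 < Z := by
    rw [hZval]
    exact div_pos (mul_pos hn' hden) hμ
  set p : Fin n → ℝ := fun j => ((μ * (n:ℝ) + L j - μ) / μ) / Z with hpdef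
  have hpsum : ∑ j, p j = 1 := by
    rw [hpdef, ← Finset.sum_div, ← hZ, div_self (ne_of_gt hZpos)]
  have hpprop : ∀ j, p j * (μ * (n:ℝ)) = c * (μ * (n:ℝ) + (L j - μ)) := by
    intro j
    rw [hpdef, hcdef, hZval]
    field_simp
    ring
  -- per-index improvement value
  have hB' : ∀ j, pfB d n μ f f' (Function.update φ j (z φ j))
        (pfW d n μ f' (Function.update φ j (z φ j)))
      = Bw + (μ / 2 * ‖z φ j - w‖ ^ 2 + 1 / (n:ℝ) * pfE d n μ f f' φ j (z φ j)) := by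
    intro j
    have hwz := pf_w_update_eq hn hμ (hμL j) (hgrad j) (hsmooth j) φ (z φ j) (hz φ j)
    rw [hwz, pfB_erase (j := j)]
    have h1 : pfL d n μ f f' (Function.update φ j (z φ j)) j (z φ j) = f j (z φ j) := by
      rw [pfL_update_self]
      simp
    have h2 : ∑ i ∈ Finset.univ.erase j,
          pfL d n μ f f' (Function.update φ j (z φ j)) i (z φ j)
        = ∑ i ∈ Finset.univ.erase j, pfL d n μ f f' φ i (z φ j) :=
      Finset.sum_congr rfl fun i hi =>
        pfL_update_other φ (Finset.ne_of_mem_erase hi) _ _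
    rw [h1, h2]
    have h3 := pfB_erase (μ := μ) (f := f) (f' := f') (φ := φ) (j := j) (x := z φ j)
    have h4 := pfB_quad (f := f) (f' := f') hnne hμne φ (z φ j)
    rw [← hw, ← hBw] at h4
    rw [pfE]
    linarith [h3, h4]
  have hPJ : ∀ j, c / (n:ℝ) * pfE d n μ f f' φ j wstar
        - c / (n:ℝ) * ⟪pfQ d n μ f' φ j wstar, s⟫
      ≤ p j * (μ / 2 * ‖z φ j - w‖ ^ 2 + 1 / (n:ℝ) * pfE d n μ f f' φ j (z φ j)) := by
    intro j
    have := pf_perj hn hμ hμL hgrad hsmooth hsc φ j wstar (z φ j) (hz φ j)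
      c (p j) hc0 (hpprop j)
    rw [← hw, ← hs] at this
    exact this
  -- sum of ξ
  have hxi : ∑ j, pfQ d n μ f' φ j wstar = -((μ * (n:ℝ)) • s) := by
    have hstar0 := pf_star_grad hn hμ hμL hgrad hsmooth wstar hstar
    simp only [pfQ]
    rw [Finset.sum_sub_distrib, Finset.sum_sub_distrib, hstar0, ← Finset.smul_sum,
      Finset.sum_sub_distrib, Finset.sum_const, Finset.card_univ, Fintype.card_fin,
      ← Nat.cast_smul_eq_nsmul ℝ, hs, hw, pfW]
    match_scalars <;> (field_simp; try ring; try tauto)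
  have hsum1 : ∑ j, (c / (n:ℝ) * pfE d n μ f f' φ j wstar
        - c / (n:ℝ) * ⟪pfQ d n μ f' φ j wstar, s⟫)
      = c / (n:ℝ) * ∑ j, pfE d n μ f f' φ j wstar + c * μ * ‖s‖ ^ 2 := by
    rw [Finset.sum_sub_distrib, ← Finset.mul_sum, ← Finset.mul_sum, ← sum_inner, hxi,
      inner_neg_left, real_inner_smul_left, real_inner_self_eq_norm_sq]
    field_simp
    ring
  have hgain : c / (n:ℝ) * ∑ j, pfE d n μ f f' φ j wstar + c * μ * ‖s‖ ^ 2
      ≤ ∑ j, p j * (μ / 2 * ‖z φ j - w‖ ^ 2 + 1 / (n:ℝ) * pfE d n μ f f' φ j (z φ j)) := by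
    rw [← hsum1]
    exact Finset.sum_le_sum fun j _ => hPJ j
  have hBsum : ∑ j, (p j * pfB d n μ f f' (Function.update φ j (z φ j))
        (pfW d n μ f' (Function.update φ j (z φ j))))
      = Bw + ∑ j, p j * (μ / 2 * ‖z φ j - w‖ ^ 2
          + 1 / (n:ℝ) * pfE d n μ f f' φ j (z φ j)) := by
    have h1 : ∀ j ∈ Finset.univ, p j * pfB d n μ f f' (Function.update φ j (z φ j))
          (pfW d n μ f' (Function.update φ j (z φ j)))
        = p j * Bw + p j * (μ / 2 * ‖z φ j - w‖ ^ 2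
            + 1 / (n:ℝ) * pfE d n μ f f' φ j (z φ j)) := by
      intro j _
      rw [hB' j]
      ring
    rw [Finset.sum_congr rfl h1, Finset.sum_add_distrib, ← Finset.sum_mul, hpsum, one_mul]
  have hD : (1 / (n:ℝ)) * ∑ i, f i wstar - Bw
      = (1 / (n:ℝ)) * ∑ j, pfE d n μ f f' φ j wstar + μ / 2 * ‖s‖ ^ 2 := by
    have h1 := pfB_quad (f := f) (f' := f') hnne hμne φ wstar
    rw [← hw, ← hBw, ← hs] at h1
    have h2 : (1 / (n:ℝ)) * ∑ i, f i wstar - pfB d n μ f f' φ wstar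
        = (1 / (n:ℝ)) * ∑ j, pfE d n μ f f' φ j wstar := by
      rw [pfB, ← mul_sub, ← Finset.sum_sub_distrib]
      simp only [pfE]
    linarith
  have hDc : c * ((1 / (n:ℝ)) * ∑ i, f i wstar - Bw)
      = c * ((1 / (n:ℝ)) * ∑ j, pfE d n μ f f' φ j wstar + μ / 2 * ‖s‖ ^ 2) := by
    rw [hD]
  have hcs : 0 ≤ c * (μ / 2 * ‖s‖ ^ 2) := mul_nonneg hc0 (by positivity)
  rw [hBsum]
  have hfinal : c / (n:ℝ) * ∑ j, pfE d n μ f f' φ j wstar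
      = c * ((1 / (n:ℝ)) * ∑ j, pfE d n μ f f' φ j wstar) := by ring
  linarith [hgain, hDc, hcs, hfinal]

end STEP


lemma pfIter_shift (d n : ℕ)
    (z : (Fin n → EuclideanSpace ℝ (Fin d)) → Fin n → EuclideanSpace ℝ (Fin d))
    (φ0 : Fin n → EuclideanSpace ℝ (Fin d)) (js : ℕ → Fin n) (m : ℕ) :
    pfIter d n z φ0 js (m + 1)
      = pfIter d n z (Function.update φ0 (js 0) (z φ0 (js 0))) (fun t => js (t + 1)) m := by
  induction m with
  | zero => rfl
  | succ m ih =>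
      show Function.update (pfIter d n z φ0 js (m + 1)) (js (m + 1))
          (z (pfIter d n z φ0 js (m + 1)) (js (m + 1))) = _
      rw [ih]
      rfl

lemma extSeq_cons_zero {n : ℕ} (hn : 0 < n) {k : ℕ} (j : Fin n) (js : Fin k → Fin n) :
    extSeq hn (Fin.cons (α := fun _ => Fin n) j js) 0 = j := by
  simp [extSeq]

lemma extSeq_cons_succ {n : ℕ} (hn : 0 < n) {k : ℕ} (j : Fin n) (js : Fin k → Fin n) :
    (fun t => extSeq hn (Fin.cons (α := fun _ => Fin n) j js) (t + 1)) = extSeq hn js := by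
  funext t
  simp only [extSeq]
  by_cases h : t < k
  · rw [dif_pos (Nat.succ_lt_succ h), dif_pos h]
    exact Fin.cons_succ (α := fun _ => Fin n) j js ⟨t, h⟩
  · rw [dif_neg (fun hh => h (Nat.lt_of_succ_lt_succ hh)), dif_neg h]

lemma pf_sum_funsplit {n k : ℕ} (G : (Fin (k + 1) → Fin n) → ℝ) :
    ∑ js : Fin (k + 1) → Fin n, G js
      = ∑ j : Fin n, ∑ js : Fin k → Fin n, G (Fin.cons j js) :=
  calc ∑ js : Fin (k + 1) → Fin n, G js
      = ∑ x : Fin n × (Fin k → Fin n), G (Fin.cons x.1 x.2) :=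
        (Fintype.sum_equiv (Fin.consEquiv fun _ => Fin n)
          (fun x => G (Fin.cons x.1 x.2)) G (fun x => rfl)).symm
    _ = ∑ j : Fin n, ∑ js : Fin k → Fin n, G (Fin.cons j js) := Fintype.sum_prod_type _

lemma pf_helper1 {n : ℕ} (P X : Fin n → ℝ) (fs : ℝ) (hpsum : ∑ j, P j = 1) :
    fs - ∑ j, P j * X j = ∑ j, P j * (fs - X j) := by
  simp only [mul_sub]
  rw [Finset.sum_sub_distrib, ← Finset.sum_mul, hpsum, one_mul]

lemma pf_helper2 {n : ℕ} (P Y : Fin n → ℝ) (r fs : ℝ) (hpsum : ∑ j, P j = 1) :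
    ∑ j, P j * (r * (fs - Y j)) = r * (fs - ∑ j, P j * Y j) := by
  have h1 : ∀ j ∈ Finset.univ, P j * (r * (fs - Y j)) = r * (P j * fs) - r * (P j * Y j) := by
    intro j _; ring
  rw [Finset.sum_congr rfl h1, Finset.sum_sub_distrib, ← Finset.mul_sum, ← Finset.mul_sum,
    ← Finset.sum_mul, hpsum, one_mul, ← mul_sub]


theorem prox_finito_weighted_convergence (d n k : ℕ) (hn : 0 < n) (μ : ℝ)
    (L : Fin n → ℝ) (hμ : 0 < μ) (hμL : ∀ i, μ ≤ L i)
    (f : Fin n → EuclideanSpace ℝ (Fin d) → ℝ)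
    (f' : Fin n → EuclideanSpace ℝ (Fin d) → EuclideanSpace ℝ (Fin d))
    (hgrad : ∀ i x, HasGradientAt (f i) (f' i x) x)
    (hsmooth : ∀ i x y, ‖f' i x - f' i y‖ ≤ L i * ‖x - y‖)
    (hsc : ∀ i x y, f i x ≥ f i y + ⟪f' i y, x - y⟫ + μ / 2 * ‖x - y‖ ^ 2)
    (wstar : EuclideanSpace ℝ (Fin d))
    (hstar : ∀ x, (1 / (n : ℝ)) * ∑ i, f i wstar ≤ (1 / (n : ℝ)) * ∑ i, f i x)
    (φ0 : Fin n → EuclideanSpace ℝ (Fin d))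
    (z : (Fin n → EuclideanSpace ℝ (Fin d)) → Fin n → EuclideanSpace ℝ (Fin d))
    (hz : ∀ ψ (j : Fin n) (y : EuclideanSpace ℝ (Fin d)),
      (1 / (n : ℝ)) * f j (z ψ j)
          + (1 / (n : ℝ)) * ∑ i ∈ Finset.univ.erase j, pfL d n μ f f' ψ i (z ψ j)
        ≤ (1 / (n : ℝ)) * f j y
          + (1 / (n : ℝ)) * ∑ i ∈ Finset.univ.erase j, pfL d n μ f f' ψ i y) :
    (1 / (n : ℝ)) * ∑ i, f i wstar
      - ∑ js : Fin k → Fin n,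
          (∏ t : Fin k, (((μ * n + L (js t) - μ) / μ) / ∑ i, (μ * n + L i - μ) / μ)) *
            pfB d n μ f f' (pfIter d n z φ0 (extSeq hn js) k)
              (pfW d n μ f' (pfIter d n z φ0 (extSeq hn js) k))
      ≤ (1 - μ / (μ * n + (1 / (n : ℝ)) * ∑ i, L i - μ)) ^ k *
          ((1 / (n : ℝ)) * ∑ i, f i wstar - pfB d n μ f f' φ0 (pfW d n μ f' φ0)) := by
  have hn' : (0:ℝ) < n := by exact_mod_cast hn
  have hn1 : (1:ℝ) ≤ n := by exact_mod_cast hn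
  have hSLn : (n:ℝ) * μ ≤ ∑ i, L i := by
    calc (n:ℝ) * μ = ∑ _i : Fin n, μ := by
          rw [Finset.sum_const, Finset.card_univ, Fintype.card_fin, nsmul_eq_mul]
      _ ≤ ∑ i, L i := Finset.sum_le_sum fun i _ => hμL i
  have hLμ : μ ≤ (1 / (n:ℝ)) * ∑ i, L i := by
    rw [div_mul_eq_mul_div, one_mul, le_div_iff₀ hn']
    linarith
  have hden : 0 < μ * (n:ℝ) + (1 / (n:ℝ)) * ∑ i, L i - μ := by nlinarith
  have h1c : 0 ≤ 1 - μ / (μ * (n:ℝ) + (1 / (n:ℝ)) * ∑ i, L i - μ) := by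
    rw [sub_nonneg, div_le_one hden]
    nlinarith
  have hZval : (∑ i, (μ * (n:ℝ) + L i - μ) / μ)
      = (n:ℝ) * (μ * (n:ℝ) + (1 / (n:ℝ)) * ∑ i, L i - μ) / μ := by
    rw [← Finset.sum_div]
    have h1 : ∑ i, (μ * (n:ℝ) + L i - μ) = (n:ℝ) * (μ * (n:ℝ) - μ) + ∑ i, L i := by
      have h2 : ∀ i ∈ Finset.univ, μ * (n:ℝ) + L i - μ = (μ * (n:ℝ) - μ) + L i := by
        intro i _; ring
      rw [Finset.sum_congr rfl h2, Finset.sum_add_distrib, Finset.sum_const,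
        Finset.card_univ, Fintype.card_fin, nsmul_eq_mul]
    rw [h1]
    field_simp
    ring
  have hZpos : 0 < ∑ i, (μ * (n:ℝ) + L i - μ) / μ := by
    rw [hZval]
    exact div_pos (mul_pos hn' hden) hμ
  have hP0 : ∀ j : Fin n,
      0 ≤ ((μ * (n:ℝ) + L j - μ) / μ) / ∑ i, (μ * (n:ℝ) + L i - μ) / μ := by
    intro j
    apply div_nonneg _ hZpos.le
    apply div_nonneg _ hμ.le
    nlinarith [hμL j]
  have hpsum : ∑ j, ((μ * (n:ℝ) + L j - μ) / μ) / (∑ i, (μ * (n:ℝ) + L i - μ) / μ) = 1 := by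
    rw [← Finset.sum_div, div_self (ne_of_gt hZpos)]
  induction k generalizing φ0 with
  | zero =>
      simp only [Fintype.sum_unique, Finset.univ_eq_empty, Finset.prod_empty, one_mul, pow_zero]
      exact le_rfl
  | succ k IH =>
      have hre : ∑ js : Fin (k + 1) → Fin n,
            (∏ t : Fin (k + 1),
              ((μ * (n:ℝ) + L (js t) - μ) / μ) / ∑ i, (μ * (n:ℝ) + L i - μ) / μ) *
              pfB d n μ f f' (pfIter d n z φ0 (extSeq hn js) (k + 1))
                (pfW d n μ f' (pfIter d n z φ0 (extSeq hn js) (k + 1)))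
          = ∑ j : Fin n, ∑ js : Fin k → Fin n,
              (∏ t : Fin (k + 1),
                ((μ * (n:ℝ) + L ((Fin.cons (α := fun _ => Fin n) j js) t) - μ) / μ) / ∑ i, (μ * (n:ℝ) + L i - μ) / μ) *
              pfB d n μ f f' (pfIter d n z φ0 (extSeq hn (Fin.cons (α := fun _ => Fin n) j js)) (k + 1))
                (pfW d n μ f' (pfIter d n z φ0 (extSeq hn (Fin.cons (α := fun _ => Fin n) j js)) (k + 1))) := by
        exact pf_sum_funsplit _
      have e1 : ∀ j ∈ (Finset.univ : Finset (Fin n)),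
          (∑ js : Fin k → Fin n,
            (∏ t : Fin (k + 1),
              ((μ * (n:ℝ) + L ((Fin.cons (α := fun _ => Fin n) j js) t) - μ) / μ) / ∑ i, (μ * (n:ℝ) + L i - μ) / μ) *
            pfB d n μ f f' (pfIter d n z φ0 (extSeq hn (Fin.cons (α := fun _ => Fin n) j js)) (k + 1))
              (pfW d n μ f' (pfIter d n z φ0 (extSeq hn (Fin.cons (α := fun _ => Fin n) j js)) (k + 1))))
          = (((μ * (n:ℝ) + L j - μ) / μ) / ∑ i, (μ * (n:ℝ) + L i - μ) / μ)
            * ∑ js : Fin k → Fin n,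
              (∏ t : Fin k,
                ((μ * (n:ℝ) + L (js t) - μ) / μ) / ∑ i, (μ * (n:ℝ) + L i - μ) / μ) *
              pfB d n μ f f'
                (pfIter d n z (Function.update φ0 j (z φ0 j)) (extSeq hn js) k)
                (pfW d n μ f'
                  (pfIter d n z (Function.update φ0 j (z φ0 j)) (extSeq hn js) k)) := by
        intro j _
        rw [Finset.mul_sum]
        apply Finset.sum_congr rfl
        intro js _
        have hiter : pfIter d n z φ0 (extSeq hn (Fin.cons (α := fun _ => Fin n) j js)) (k + 1)
            = pfIter d n z (Function.update φ0 j (z φ0 j)) (extSeq hn js) k := by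
          rw [pfIter_shift, extSeq_cons_zero, extSeq_cons_succ]
        have hprod : (∏ t : Fin (k + 1),
              ((μ * (n:ℝ) + L ((Fin.cons (α := fun _ => Fin n) j js) t) - μ) / μ) / ∑ i, (μ * (n:ℝ) + L i - μ) / μ)
            = (((μ * (n:ℝ) + L j - μ) / μ) / ∑ i, (μ * (n:ℝ) + L i - μ) / μ)
              * ∏ t : Fin k,
                ((μ * (n:ℝ) + L (js t) - μ) / μ) / ∑ i, (μ * (n:ℝ) + L i - μ) / μ := by
          rw [Fin.prod_univ_succ]
          simp only [Fin.cons_zero, Fin.cons_succ]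
        rw [hiter, hprod, mul_assoc]
      calc (1 / (n : ℝ)) * ∑ i, f i wstar
            - ∑ js : Fin (k + 1) → Fin n,
              (∏ t : Fin (k + 1),
                ((μ * (n:ℝ) + L (js t) - μ) / μ) / ∑ i, (μ * (n:ℝ) + L i - μ) / μ) *
                pfB d n μ f f' (pfIter d n z φ0 (extSeq hn js) (k + 1))
                  (pfW d n μ f' (pfIter d n z φ0 (extSeq hn js) (k + 1)))
          = ∑ j : Fin n, (((μ * (n:ℝ) + L j - μ) / μ) / ∑ i, (μ * (n:ℝ) + L i - μ) / μ)
              * ((1 / (n : ℝ)) * ∑ i, f i wstar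
                - ∑ js : Fin k → Fin n,
                  (∏ t : Fin k,
                    ((μ * (n:ℝ) + L (js t) - μ) / μ) / ∑ i, (μ * (n:ℝ) + L i - μ) / μ) *
                  pfB d n μ f f'
                    (pfIter d n z (Function.update φ0 j (z φ0 j)) (extSeq hn js) k)
                    (pfW d n μ f'
                      (pfIter d n z (Function.update φ0 j (z φ0 j)) (extSeq hn js) k))) := by
            rw [hre, Finset.sum_congr rfl e1]
            exact pf_helper1
              (fun j => ((μ * (n:ℝ) + L j - μ) / μ) / ∑ i, (μ * (n:ℝ) + L i - μ) / μ)
              (fun j => ∑ js : Fin k → Fin n,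
                (∏ t : Fin k,
                  ((μ * (n:ℝ) + L (js t) - μ) / μ) / ∑ i, (μ * (n:ℝ) + L i - μ) / μ) *
                pfB d n μ f f'
                  (pfIter d n z (Function.update φ0 j (z φ0 j)) (extSeq hn js) k)
                  (pfW d n μ f'
                    (pfIter d n z (Function.update φ0 j (z φ0 j)) (extSeq hn js) k)))
              _ hpsum
        _ ≤ ∑ j : Fin n, (((μ * (n:ℝ) + L j - μ) / μ) / ∑ i, (μ * (n:ℝ) + L i - μ) / μ)
              * ((1 - μ / (μ * (n:ℝ) + (1 / (n:ℝ)) * ∑ i, L i - μ)) ^ k *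
                ((1 / (n : ℝ)) * ∑ i, f i wstar
                  - pfB d n μ f f' (Function.update φ0 j (z φ0 j))
                      (pfW d n μ f' (Function.update φ0 j (z φ0 j))))) := by
            apply Finset.sum_le_sum
            intro j _
            exact mul_le_mul_of_nonneg_left (IH (Function.update φ0 j (z φ0 j))) (hP0 j)
        _ = (1 - μ / (μ * (n:ℝ) + (1 / (n:ℝ)) * ∑ i, L i - μ)) ^ k *
              ((1 / (n : ℝ)) * ∑ i, f i wstar
                - ∑ j : Fin n, (((μ * (n:ℝ) + L j - μ) / μ) / ∑ i, (μ * (n:ℝ) + L i - μ) / μ)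
                  * pfB d n μ f f' (Function.update φ0 j (z φ0 j))
                      (pfW d n μ f' (Function.update φ0 j (z φ0 j)))) := by
            exact pf_helper2
              (fun j => ((μ * (n:ℝ) + L j - μ) / μ) / ∑ i, (μ * (n:ℝ) + L i - μ) / μ)
              (fun j => pfB d n μ f f' (Function.update φ0 j (z φ0 j))
                  (pfW d n μ f' (Function.update φ0 j (z φ0 j))))
              _ _ hpsum
        _ ≤ (1 - μ / (μ * (n:ℝ) + (1 / (n:ℝ)) * ∑ i, L i - μ)) ^ k *
              ((1 - μ / (μ * (n:ℝ) + (1 / (n:ℝ)) * ∑ i, L i - μ)) *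
                ((1 / (n : ℝ)) * ∑ i, f i wstar - pfB d n μ f f' φ0 (pfW d n μ f' φ0))) := by
            apply mul_le_mul_of_nonneg_left _ (pow_nonneg h1c k)
            exact pf_one_step hn hμ hμL hgrad hsmooth hsc wstar hstar z hz φ0
        _ = (1 - μ / (μ * (n:ℝ) + (1 / (n:ℝ)) * ∑ i, L i - μ)) ^ (k + 1) *
              ((1 / (n : ℝ)) * ∑ i, f i wstar - pfB d n μ f f' φ0 (pfW d n μ f' φ0)) := by
            ring
end PF
end
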